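/- Let p and p' each be either 0 or a prime number, and let S̄, S̄' ∈ [Π_n(G)] satisfy [N_G(S̄):S_0] ≢ 0 (mod p) and [N_G(S̄'):S'_0] ≢ 0 (mod p'). Then the prime ideals of B_n(G) satisfy I_{S̄',p'} ⊆ I_{S̄,p}, where I_{S̄,p} = {x ∈ B_n(G) : x_{S̄} ∈ pℤ}, if and only if either (i) p' = p and S̄' = S̄, or (ii) p' = 0, p is a prime, and m(S̄',T̄) ≡ m(S̄,T̄) (mod p) for every n-slice T̄ of G. -/

import Mathlib

variable {G : Type*}

/-- The conjugate slice `ᵍS̄ = (gS₀g⁻¹, …, gSₙg⁻¹)`. -/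
def sliceConj [Group G] {n : ℕ} (g : G) (S : Fin (n + 1) → Subgroup G) :
    Fin (n + 1) → Subgroup G :=
  fun i => (S i).map (MulAut.conj g).toMonoidHom

/-- The mark `m(K̄,S̄) = |{gS₀ ∈ G/S₀ : g⁻¹Kᵢg ≤ Sᵢ for all i}|`. -/
noncomputable def mark [Group G] {n : ℕ} (K S : Fin (n + 1) → Subgroup G) : ℕ :=
  Nat.card {x : G ⧸ S 0 //
    ∃ g : G, QuotientGroup.mk g = x ∧ ∀ i, ∀ k ∈ K i, g⁻¹ * k * g ∈ S i}

/-- The normalizer `N_G(S̄) = ⋂ᵢ N_G(Sᵢ)` of a slice. -/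
def sliceNormalizer [Group G] {n : ℕ} (S : Fin (n + 1) → Subgroup G) : Subgroup G :=
  ⨅ i, Subgroup.normalizer (S i : Set G)

/-- The index `[N_G(S̄) : S₀]`. -/
noncomputable def sliceIndex [Group G] {n : ℕ} (S : Fin (n + 1) → Subgroup G) : ℕ :=
  (S 0).relIndex (sliceNormalizer S)

private lemma card_map_conj [Group G] (g : G) (H : Subgroup G) :
    Nat.card (H.map (MulAut.conj g).toMonoidHom) = Nat.card H :=
  (Nat.card_congr (H.equivMapOfInjective _ (MulAut.conj g).injective).toEquiv).symm

private lemma map_conj_le [Group G] {g : G} {H K : Subgroup G}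
    (h : ∀ k ∈ H, g⁻¹ * k * g ∈ K) : H.map (MulAut.conj g⁻¹).toMonoidHom ≤ K := by
  rintro x ⟨y, hy, rfl⟩
  simpa using h y hy

private lemma conj_mem_iff [Group G] [Finite G] (g : G) (H : Subgroup G) :
    (∀ k ∈ H, g⁻¹ * k * g ∈ H) ↔ g ∈ Subgroup.normalizer (H : Set G) := by
  constructor
  · intro h
    have hle : H.map (MulAut.conj g⁻¹).toMonoidHom ≤ H := map_conj_le h
    have heq : H.map (MulAut.conj g⁻¹).toMonoidHom = H :=
      Subgroup.eq_of_le_of_card_ge hle (le_of_eq (card_map_conj g⁻¹ H).symm)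
    rw [← Subgroup.inv_mem_iff, Subgroup.mem_normalizer_iff]
    intro x
    constructor
    · intro hx
      simpa [mul_assoc] using h x hx
    · intro hx
      have hw : g⁻¹ * x * g ∈ H.map (MulAut.conj g⁻¹).toMonoidHom := by
        rw [heq]; simpa [mul_assoc] using hx
      obtain ⟨y, hy, hxy⟩ := Subgroup.mem_map.mp hw
      have h2 : g⁻¹ * y * g = g⁻¹ * x * g := by simpa using hxy
      have hyx : y = x := mul_left_cancel (mul_right_cancel h2)
      exact hyx ▸ hy
  · intro hg k hk
    have hg' : g⁻¹ ∈ Subgroup.normalizer (H : Set G) := Subgroup.inv_mem _ hg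
    have := (Subgroup.mem_normalizer_iff.mp hg' k).mp hk
    simpa [mul_assoc] using this

private lemma mark_self [Group G] [Finite G] {n : ℕ} (S : Fin (n + 1) → Subgroup G) :
    mark S S = sliceIndex S := by
  have hiff : ∀ x : G ⧸ S 0,
      (∃ g : G, QuotientGroup.mk g = x ∧ ∀ i, ∀ k ∈ S i, g⁻¹ * k * g ∈ S i) ↔
      (∃ g : G, QuotientGroup.mk g = x ∧ g ∈ sliceNormalizer S) := by
    intro x
    constructor
    · rintro ⟨g, hg, hc⟩
      exact ⟨g, hg, Subgroup.mem_iInf.mpr fun i => (conj_mem_iff g (S i)).mp (hc i)⟩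
    · rintro ⟨g, hg, hc⟩
      exact ⟨g, hg, fun i => (conj_mem_iff g (S i)).mpr (Subgroup.mem_iInf.mp hc i)⟩
  rw [mark, Nat.card_congr (Equiv.subtypeEquivRight hiff)]
  have : sliceIndex S = Nat.card
      (sliceNormalizer S ⧸ (S 0).subgroupOf (sliceNormalizer S)) := rfl
  rw [this]
  apply Nat.card_congr
  symm
  refine Equiv.ofBijective
    (fun y => Quotient.liftOn' y
      (fun m => (⟨QuotientGroup.mk (m : G), m, rfl, m.2⟩ :
        {x : G ⧸ S 0 // ∃ g : G, QuotientGroup.mk g = x ∧ g ∈ sliceNormalizer S}))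
      ?_) ⟨?_, ?_⟩
  · intro a b hab
    have h1 : a⁻¹ * b ∈ (S 0).subgroupOf (sliceNormalizer S) :=
      QuotientGroup.leftRel_apply.mp hab
    have h2 : (a : G)⁻¹ * b ∈ S 0 := h1
    exact Subtype.ext (QuotientGroup.eq.mpr h2)
  · intro a b hab
    induction a using Quotient.inductionOn'
    induction b using Quotient.inductionOn'
    rename_i a b
    have h2 : (a : G)⁻¹ * b ∈ S 0 := QuotientGroup.eq.mp (congrArg Subtype.val hab)
    exact Quotient.sound' (QuotientGroup.leftRel_apply.mpr h2)
  · rintro ⟨x, g, hg, hgN⟩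
    exact ⟨QuotientGroup.mk (⟨g, hgN⟩ : sliceNormalizer S), Subtype.ext hg⟩

private lemma mark_sliceConj [Group G] {n : ℕ} (c : G) (K T : Fin (n + 1) → Subgroup G) :
    mark K (sliceConj c T) = mark K T := by
  apply Nat.card_congr
  let qe : G ⧸ (sliceConj c T) 0 ≃ G ⧸ T 0 :=
    { toFun := Quotient.map' (· * c) (fun a b hab => by
        have h1 : a⁻¹ * b ∈ (sliceConj c T) 0 := QuotientGroup.leftRel_apply.mp hab
        obtain ⟨t, ht, hteq⟩ := Subgroup.mem_map.mp h1
        refine QuotientGroup.leftRel_apply.mpr ?_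
        have h2 : (a * c)⁻¹ * (b * c) = c⁻¹ * (a⁻¹ * b) * c := by group
        rw [h2, ← hteq]
        simpa [mul_assoc] using ht)
      invFun := Quotient.map' (· * c⁻¹) (fun a b hab => by
        have h1 : a⁻¹ * b ∈ T 0 := QuotientGroup.leftRel_apply.mp hab
        refine QuotientGroup.leftRel_apply.mpr ?_
        have h2 : (a * c⁻¹)⁻¹ * (b * c⁻¹) = c * (a⁻¹ * b) * c⁻¹ := by group
        rw [h2]
        exact ⟨a⁻¹ * b, h1, by simp⟩)
      left_inv := by
        intro x
        induction x using QuotientGroup.induction_on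
        rename_i a
        show Quotient.mk'' ((a * c) * c⁻¹) = _
        simp [mul_assoc]
      right_inv := by
        intro x
        induction x using QuotientGroup.induction_on
        rename_i a
        show Quotient.mk'' ((a * c⁻¹) * c) = _
        simp [mul_assoc] }
  refine Equiv.subtypeEquiv qe fun x => ?_
  induction x using QuotientGroup.induction_on
  rename_i a
  have hqe : qe (QuotientGroup.mk a) = QuotientGroup.mk (a * c) := rfl
  rw [hqe]
  constructor
  · rintro ⟨g, hg, hc⟩
    refine ⟨g * c, ?_, ?_⟩
    · have h4 : g⁻¹ * a ∈ (sliceConj c T) 0 := QuotientGroup.eq.mp hg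
      obtain ⟨t, ht, hteq⟩ := Subgroup.mem_map.mp h4
      refine QuotientGroup.eq.mpr ?_
      have h2 : (g * c)⁻¹ * (a * c) = c⁻¹ * (g⁻¹ * a) * c := by group
      rw [h2, ← hteq]
      simpa [mul_assoc] using ht
    · intro i k hk
      obtain ⟨t, ht, hteq⟩ := Subgroup.mem_map.mp (hc i k hk)
      have h3 : (g * c)⁻¹ * k * (g * c) = c⁻¹ * (g⁻¹ * k * g) * c := by group
      rw [h3, ← hteq]
      simpa [mul_assoc] using ht
  · rintro ⟨g, hg, hc⟩
    refine ⟨g * c⁻¹, ?_, ?_⟩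
    · have h4 : g⁻¹ * (a * c) ∈ T 0 := QuotientGroup.eq.mp hg
      refine QuotientGroup.eq.mpr ?_
      refine ⟨g⁻¹ * (a * c), h4, ?_⟩
      show c * (g⁻¹ * (a * c)) * c⁻¹ = _
      group
    · intro i k hk
      refine ⟨g⁻¹ * k * g, hc i k hk, ?_⟩
      show c * (g⁻¹ * k * g) * c⁻¹ = _
      group

private lemma subconj_of_mark_ne_zero [Group G] [Finite G] {n : ℕ}
    {K S : Fin (n + 1) → Subgroup G} (h : mark K S ≠ 0) :
    ∃ g : G, ∀ i, ∀ k ∈ K i, g⁻¹ * k * g ∈ S i := by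
  have := (Nat.card_ne_zero.mp h).1
  obtain ⟨x, g, _, hc⟩ := this
  exact ⟨g, hc⟩

private lemma sliceConj_one [Group G] {n : ℕ} (T : Fin (n + 1) → Subgroup G) :
    sliceConj (1 : G) T = T := by
  funext i
  ext x
  simp [sliceConj]

private lemma eq_of_mutual [Group G] [Finite G] {n : ℕ}
    {R : Finset {S : Fin (n + 1) → Subgroup G // Monotone S}}
    (hR : ∀ S : {S : Fin (n + 1) → Subgroup G // Monotone S},
      ∃! T, T ∈ R ∧ ∃ g : G, sliceConj g S.1 = T.1)
    (S S' : R) (g h : G)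
    (h1 : ∀ i, ∀ k ∈ S'.1.1 i, g⁻¹ * k * g ∈ S.1.1 i)
    (h2 : ∀ i, ∀ k ∈ S.1.1 i, h⁻¹ * k * h ∈ S'.1.1 i) : S' = S := by
  have hconj : sliceConj g⁻¹ S'.1.1 = S.1.1 := by
    funext i
    refine Subgroup.eq_of_le_of_card_ge (map_conj_le (h1 i)) ?_
    calc Nat.card (S.1.1 i) = Nat.card ((S.1.1 i).map (MulAut.conj h⁻¹).toMonoidHom) :=
          (card_map_conj h⁻¹ _).symm
      _ ≤ Nat.card (S'.1.1 i) := Subgroup.card_le_of_le (map_conj_le (h2 i))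
      _ = Nat.card ((S'.1.1 i).map (MulAut.conj g⁻¹).toMonoidHom) := (card_map_conj g⁻¹ _).symm
  obtain ⟨T, _, hun⟩ := hR S'.1
  have e1 : S.1 = T := hun S.1 ⟨S.2, g⁻¹, hconj⟩
  have e2 : S'.1 = T := hun S'.1 ⟨S'.2, 1, sliceConj_one _⟩
  exact Subtype.ext (e2.trans e1.symm)


/-- inclusion of prime ideals `I_{S̄',p'} ⊆ I_{S̄,p}` of `B_n(G)`
holds iff either `p' = p` and `S̄' = S̄`, or `p' = 0`, `p` is prime, and
`m(S̄',T̄) ≡ m(S̄,T̄) (mod p)` for every `n`-slice `T̄`. -/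
theorem prime_ideal_inclusion {n : ℕ} [Group G] [Finite G]
    (R : Finset {S : Fin (n + 1) → Subgroup G // Monotone S})
    (hR : ∀ S : {S : Fin (n + 1) → Subgroup G // Monotone S},
      ∃! T, T ∈ R ∧ ∃ g : G, sliceConj g S.1 = T.1)
    (B : Subring (R → ℤ))
    (hBv : ∀ S : R, (fun T : R => (mark T.1.1 S.1.1 : ℤ)) ∈ B)
    (hBspan : ∀ x : B, (x : R → ℤ) ∈ Submodule.span ℤ
      (Set.range (fun S : R => fun T : R => (mark T.1.1 S.1.1 : ℤ))))
    (p p' : ℕ) (hp : p = 0 ∨ p.Prime) (hp' : p' = 0 ∨ p'.Prime)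
    (S S' : R)
    (hpS : ¬(p ∣ sliceIndex S.1.1)) (hpS' : ¬(p' ∣ sliceIndex S'.1.1)) :
    (∀ x : B, (p' : ℤ) ∣ (x : R → ℤ) S' → (p : ℤ) ∣ (x : R → ℤ) S) ↔
      ((p' = p ∧ S' = S) ∨
        (p' = 0 ∧ p.Prime ∧
          ∀ T : Fin (n + 1) → Subgroup G, Monotone T →
            mark S'.1.1 T ≡ mark S.1.1 T [MOD p])) := by
  constructor
  · intro H
    have key : ∀ x : B, (p : ℤ) ∣ ((x : R → ℤ) S - (x : R → ℤ) S') := by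
      intro x
      have h0 := H (x - (((x : R → ℤ) S' : ℤ) : B)) (by
        simp)
      simpa using h0
    have hdvd1 : (p : ℤ) ∣ ((mark S.1.1 S.1.1 : ℤ) - (mark S'.1.1 S.1.1 : ℤ)) := by
      simpa using key ⟨_, hBv S⟩
    have hdvd2 : (p : ℤ) ∣ ((mark S.1.1 S'.1.1 : ℤ) - (mark S'.1.1 S'.1.1 : ℤ)) := by
      simpa using key ⟨_, hBv S'⟩
    have hpp' : p ∣ p' := by
      have h0 := H (((p' : ℤ) : B)) (by simp)
      have : (p : ℤ) ∣ (p' : ℤ) := by simpa using h0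
      exact_mod_cast this
    have hSSeq : ¬(p ∣ sliceIndex S'.1.1) → S' = S := by
      intro hpS'p
      have hm1 : mark S'.1.1 S.1.1 ≠ 0 := by
        intro h0
        apply hpS
        rw [← mark_self]
        have : (p : ℤ) ∣ (mark S.1.1 S.1.1 : ℤ) := by simpa [h0] using hdvd1
        exact_mod_cast this
      have hm2 : mark S.1.1 S'.1.1 ≠ 0 := by
        intro h0
        apply hpS'p
        rw [← mark_self]
        have : (p : ℤ) ∣ (mark S'.1.1 S'.1.1 : ℤ) := by
          have := hdvd2
          rw [h0] at this
          simpa [dvd_neg] using this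
        exact_mod_cast this
      obtain ⟨g, hg⟩ := subconj_of_mark_ne_zero hm1
      obtain ⟨h, hh⟩ := subconj_of_mark_ne_zero hm2
      exact eq_of_mutual hR S S' g h hg hh
    rcases hp' with rfl | hp'p
    · rcases hp with rfl | hppr
      · exact Or.inl ⟨rfl, hSSeq hpS'⟩
      · right
        refine ⟨rfl, hppr, ?_⟩
        intro T hT
        obtain ⟨T₀, ⟨hT₀R, g, hg⟩, _⟩ := hR ⟨T, hT⟩
        have hk := key ⟨_, hBv ⟨T₀, hT₀R⟩⟩
        rw [Nat.modEq_iff_dvd]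
        have e1 : mark S.1.1 T = mark S.1.1 T₀.1 := by
          rw [← hg, mark_sliceConj]
        have e2 : mark S'.1.1 T = mark S'.1.1 T₀.1 := by
          rw [← hg, mark_sliceConj]
        rw [e1, e2]
        simpa using hk
    · have hp0 : p ≠ 0 := by
        rintro rfl
        rw [Nat.zero_dvd] at hpp'
        exact hp'p.ne_zero hpp'
      have hppr : p.Prime := hp.resolve_left hp0
      have hpe : p' = p := ((Nat.prime_dvd_prime_iff_eq hppr hp'p).mp hpp').symm
      subst hpe
      exact Or.inl ⟨rfl, hSSeq hpS'⟩
  · rintro (⟨rfl, rfl⟩ | ⟨rfl, hppr, hcong⟩)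
    · exact fun x hx => hx
    · intro x hx
      have hx0 : (x : R → ℤ) S' = 0 := by simpa using hx
      let L : (R → ℤ) →ₗ[ℤ] ZMod p :=
        { toFun := fun y => ((y S - y S' : ℤ) : ZMod p)
          map_add' := by
            intro a b
            push_cast [Pi.add_apply]
            ring
          map_smul' := by
            intro m a
            simp only [Pi.smul_apply, smul_eq_mul, RingHom.id_apply, zsmul_eq_mul]
            push_cast
            ring }
      have hle : Submodule.span ℤ
          (Set.range (fun S0 : R => fun T : R => (mark T.1.1 S0.1.1 : ℤ))) ≤
          LinearMap.ker L := by
        rw [Submodule.span_le]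
        rintro _ ⟨T, rfl⟩
        have hc := hcong T.1.1 T.1.2
        rw [Nat.modEq_iff_dvd] at hc
        simp only [SetLike.mem_coe, LinearMap.mem_ker]
        show ((mark S.1.1 T.1.1 - mark S'.1.1 T.1.1 : ℤ) : ZMod p) = 0
        rw [ZMod.intCast_zmod_eq_zero_iff_dvd]
        exact_mod_cast hc
      have hx2 := hle (hBspan x)
      rw [LinearMap.mem_ker] at hx2
      have hdvd : (p : ℤ) ∣ ((x : R → ℤ) S - (x : R → ℤ) S') := by
        have : (((x : R → ℤ) S - (x : R → ℤ) S' : ℤ) : ZMod p) = 0 := hx2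
        rwa [ZMod.intCast_zmod_eq_zero_iff_dvd] at this
      rwa [hx0, sub_zero] at hdvd
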